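/- Let E be a directed graph whose only hereditary and saturated subsets of E^0 are ∅ and E^0. If v ∈ E^0 is an infinite emitter, then for every edge e with s(e) = v there exists a path from r(e) to v. In particular, v lies on a closed path whose first edge is e, for each edge e emitted by v. -/

import Mathlib

/-- A directed graph `E = (E⁰, E¹, r, s)`: `V` is the vertex set `E⁰`, `Edg` is the
edge set `E¹`, and `s`, `r` give the source and range of each edge. -/
structure DGraph (V : Type*) (Edg : Type*) where
  s : Edg → V
  r : Edg → V

namespace DGraph

variable {V Edg : Type*}

/-- There is an edge from `v` to `w`. -/
def Adj (G : DGraph V Edg) (v w : V) : Prop := ∃ e, G.s e = v ∧ G.r e = w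

/-- There is a path (possibly of length zero, i.e. a vertex) from `v` to `w`. -/
def Reaches (G : DGraph V Edg) : V → V → Prop := Relation.ReflTransGen G.Adj

/-- A subset `X ⊆ E⁰` is hereditary if `r(e) ∈ X` whenever `s(e) ∈ X`. -/
def Hereditary (G : DGraph V Edg) (X : Set V) : Prop := ∀ e, G.s e ∈ X → G.r e ∈ X

/-- A vertex is a finite emitter if `s⁻¹(v)` is finite and nonempty. -/
def FiniteEmitter (G : DGraph V Edg) (v : V) : Prop :=
  {e | G.s e = v}.Finite ∧ {e | G.s e = v}.Nonempty

/-- A subset `X ⊆ E⁰` is saturated if every finite emitter `v` with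
`r(s⁻¹(v)) ⊆ X` lies in `X`. -/
def Saturated (G : DGraph V Edg) (X : Set V) : Prop :=
  ∀ v, FiniteEmitter G v → (∀ e, G.s e = v → G.r e ∈ X) → v ∈ X

/-- The hereditary saturated closure of `X`: the smallest hereditary and saturated
subset of `E⁰` containing `X`. -/
def satClosure (G : DGraph V Edg) (X : Set V) : Set V :=
  ⋂₀ {Y | Hereditary G Y ∧ Saturated G Y ∧ X ⊆ Y}

/-- The consecutive edges of a path match up: `r(eᵢ) = s(eᵢ₊₁)`. -/
def IsChain (G : DGraph V Edg) (p : List Edg) : Prop :=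
  List.Chain' (fun e f => G.r e = G.s f) p

/-- `p` is a closed path (of length ≥ 1) based at `v`. -/
def IsClosedPathAt (G : DGraph V Edg) (p : List Edg) (v : V) : Prop :=
  ∃ hne : p ≠ [], IsChain G p ∧ G.s (p.head hne) = v ∧ G.r (p.getLast hne) = v

/-- `p` is a closed path (of length ≥ 1). -/
def IsClosedPath (G : DGraph V Edg) (p : List Edg) : Prop := ∃ v, IsClosedPathAt G p v

/-- The vertex set `α⁰ = {s(e₁), …, s(eₙ)}` of a path. -/
def pathVerts (G : DGraph V Edg) (p : List Edg) : Set V := {w | ∃ e ∈ p, G.s e = w}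

/-- An exit of a closed path `e₁⋯eₙ` is an edge `f` with `s(f) = s(eᵢ)` and
`f ≠ eᵢ` for some `i`. -/
def IsExitOf (G : DGraph V Edg) (f : Edg) (p : List Edg) : Prop :=
  ∃ e ∈ p, G.s f = G.s e ∧ f ≠ e

/-- `p` is a simple closed path based at `v`: a closed path whose sources are
pairwise distinct. -/
def IsSimpleClosedPathAt (G : DGraph V Edg) (p : List Edg) (v : V) : Prop :=
  IsClosedPathAt G p v ∧ (p.map G.s).Nodup

end DGraph

/-- if the only hereditary and saturated subsets of `E⁰` are `∅` and
`E⁰` and `v` is an infinite emitter, then for every edge `e` with `s(e) = v` there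
is a path from `r(e)` to `v`; in particular, `v` lies on a closed path whose first
edge is `e`, for each edge `e` emitted by `v`. -/
theorem stmt5 {V Edg : Type*} (G : DGraph V Edg)
    (htriv : ∀ X : Set V, G.Hereditary X → G.Saturated X → X = ∅ ∨ X = Set.univ)
    (v : V) (hv : {e | G.s e = v}.Infinite) :
    ∀ e, G.s e = v → G.Reaches (G.r e) v ∧
      ∃ (p : List Edg) (hne : p ≠ []), G.IsClosedPathAt p v ∧ p.head hne = e := by
  -- Every vertex reaches v.
  have hall : ∀ w : V, G.Reaches w v := by
    have hX : G.Hereditary {w | ¬ G.Reaches w v} := by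
      intro e he hr
      exact he (Relation.ReflTransGen.head ⟨e, rfl, rfl⟩ hr)
    have hS : G.Saturated {w | ¬ G.Reaches w v} := by
      intro w hw hall hr
      have hwv : w ≠ v := by
        rintro rfl
        exact hv hw.1
      rcases (Relation.ReflTransGen.cases_head hr) with h | ⟨c, ⟨f, hf, hfr⟩, hc⟩
      · exact hwv h
      · exact hall f hf (hfr ▸ hc)
    rcases htriv _ hX hS with h | h
    · intro w
      by_contra hw
      exact absurd (h ▸ hw : (w : V) ∈ (∅ : Set V)) (by simp)
    · exact absurd (h ▸ Set.mem_univ v) (fun h => h (Relation.ReflTransGen.refl))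
  -- Convert Reaches into a chain of edges.
  have key : ∀ a b : V, G.Reaches a b →
      ∃ p : List Edg, G.IsChain p ∧ (p = [] → a = b) ∧
        ∀ hne : p ≠ [], G.s (p.head hne) = a ∧ G.r (p.getLast hne) = b := by
    intro a b h
    induction h using Relation.ReflTransGen.head_induction_on with
    | refl => exact ⟨[], List.isChain_nil, fun _ => rfl, fun hne => absurd rfl hne⟩
    | head hadj _ ih =>
      rename_i x c _
      obtain ⟨f, hfs, hfr⟩ := hadj
      obtain ⟨p, hchain, hnil, hlast⟩ := ih
      refine ⟨f :: p, ?_, by simp, fun hne => ⟨hfs, ?_⟩⟩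
      · refine List.IsChain.cons hchain ?_
        intro y hy
        have hpne : p ≠ [] := by rintro rfl; simp at hy
        have := (hlast hpne).1
        rw [List.head?_eq_head hpne] at hy
        rw [hfr, ← this]
        cases hy; rfl
      · rcases eq_or_ne p [] with rfl | hpne
        · simpa [hfr] using hnil rfl
        · rw [List.getLast_cons hpne]
          exact (hlast hpne).2
  intro e he
  have hre : G.Reaches (G.r e) v := hall _
  obtain ⟨p, hchain, hnil, hlast⟩ := key _ _ hre
  refine ⟨hre, e :: p, by simp, ⟨by simp, ?_, ?_, ?_⟩, by simp⟩
  · refine List.IsChain.cons hchain ?_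
    intro y hy
    have hpne : p ≠ [] := by rintro rfl; simp at hy
    rw [List.head?_eq_head hpne] at hy
    cases hy
    exact ((hlast hpne).1).symm
  · simpa using he
  · rcases eq_or_ne p [] with rfl | hpne
    · simpa using hnil rfl
    · rw [List.getLast_cons hpne]
      exact (hlast hpne).2
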